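/- Let A be a ℂ-algebra with character ε and augmentation ideal J, let W₀ be a ℂ-vector space, and let Y = hom_ℂ(A, ℂ) ⊗ W₀ where hom_ℂ(A, ℂ) = { f ∈ A* : f(Jⁿ) = 0 for some n } carries the right A-action induced by left multiplication. Then the space of ε-Whittaker vectors of Y is exactly ε ⊗ W₀ ≅ W₀, where ε ∈ hom_ℂ(A, ℂ) is the counit. -/

import Mathlib

open scoped TensorProduct
open MulOpposite

namespace Stmt11

variable (A : Type) [Ring A] [Algebra ℂ A] (W : Type) [AddCommGroup W] [Module ℂ W]

/-- The right `A`-module structure on `Hom_ℂ(A, W)` induced by left multiplication: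
`(f · a) x = f (a x)`. -/
instance opSMul : SMul Aᵐᵒᵖ (A →ₗ[ℂ] W) :=
  ⟨fun r f => f.comp (LinearMap.mulLeft ℂ r.unop)⟩

@[simp] lemma opSMul_apply (r : Aᵐᵒᵖ) (f : A →ₗ[ℂ] W) (x : A) :
    (r • f) x = f (r.unop * x) := rfl

instance opModule : Module Aᵐᵒᵖ (A →ₗ[ℂ] W) where
  one_smul f := by ext x; simp
  mul_smul r s f := by ext x; simp [mul_assoc]
  smul_zero r := by ext x; simp
  smul_add r f g := by ext x; simp
  add_smul r s f := by ext x; simp [add_mul]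
  zero_smul f := by ext x; simp

instance : IsScalarTower ℂ Aᵐᵒᵖ (A →ₗ[ℂ] W) := by
  constructor
  intro c r f
  ext x
  simp [MulOpposite.unop_smul, smul_mul_assoc]

instance : SMulCommClass ℂ Aᵐᵒᵖ (A →ₗ[ℂ] W) := by
  constructor
  intro c r f
  ext x
  simp

variable (ε : A →ₐ[ℂ] ℂ)

/-- The torsion part `hom_ℂ(A, W) = { f : f(Jⁿ) = 0 for some n }` of `Hom_ℂ(A, W)`, where
`J = ker ε` is the augmentation ideal. -/
def torsionHom : Submodule Aᵐᵒᵖ (A →ₗ[ℂ] W) where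
  carrier := {f | ∃ n : ℕ, ∀ l : List A, n ≤ l.length → (∀ a ∈ l, ε a = 0) → f l.prod = 0}
  add_mem' := by
    rintro f g ⟨n, hf⟩ ⟨m, hg⟩
    exact ⟨max n m, fun l hl hlJ => by
      simp [hf l (le_trans (le_max_left n m) hl) hlJ,
        hg l (le_trans (le_max_right n m) hl) hlJ]⟩
  zero_mem' := ⟨0, fun l _ _ => rfl⟩
  smul_mem' := by
    rintro r f ⟨n, hf⟩
    refine ⟨n + 1, fun l hl hlJ => ?_⟩
    match l, hl with
    | a :: t, hl =>
      have h1 : (r • f) ((a :: t).prod) = f (((r.unop * a) :: t).prod) := by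
        simp [List.prod_cons, mul_assoc]
      rw [h1]
      refine hf _ (by simpa using Nat.le_of_succ_le hl) ?_
      rintro b hb
      rcases List.mem_cons.mp hb with hb | hb
      · subst hb
        simp [map_mul, hlJ a (List.mem_cons_self)]
      · exact hlJ b (List.mem_cons_of_mem a hb)

instance : SMulCommClass ℂ Aᵐᵒᵖ ↥(torsionHom A W ε) := by
  constructor
  intro c r v
  apply Subtype.ext
  show c • (r • (v : A →ₗ[ℂ] W)) = r • (c • (v : A →ₗ[ℂ] W))
  ext x
  simp

/-- The counit `ε` itself is an element of `hom_ℂ(A, ℂ)`: it vanishes on `J`. -/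
lemma eps_mem : ε.toLinearMap ∈ torsionHom A ℂ ε := by
  refine ⟨1, fun l hl hlJ => ?_⟩
  have : (l.map ε).prod = 0 := by
    apply List.prod_eq_zero
    match l, hl with
    | a :: t, _ => exact List.mem_map.mpr ⟨a, List.mem_cons_self, hlJ a (List.mem_cons_self)⟩
  simpa [map_list_prod] using this

lemma smul_eps_self (a : A) :
    (op a) • (⟨ε.toLinearMap, eps_mem A ε⟩ : ↥(torsionHom A ℂ ε)) =
      ε a • (⟨ε.toLinearMap, eps_mem A ε⟩ : ↥(torsionHom A ℂ ε)) := by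
  apply Subtype.ext
  show (op a) • ε.toLinearMap = ε a • ε.toLinearMap
  ext x
  simp [map_mul]

lemma whittaker_single (f : ↥(torsionHom A ℂ ε))
    (h : ∀ a : A, (op a) • f = ε a • f) :
    f = ((f : A →ₗ[ℂ] ℂ) 1) • (⟨ε.toLinearMap, eps_mem A ε⟩ : ↥(torsionHom A ℂ ε)) := by
  apply Subtype.ext
  ext x
  have h1 := congrArg (fun g : ↥(torsionHom A ℂ ε) => ((g : A →ₗ[ℂ] ℂ) 1)) (h x)
  simp only [SetLike.val_smul, opSMul_apply, unop_op, mul_one, LinearMap.smul_apply,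
    smul_eq_mul] at h1
  simpa [mul_comm] using h1

/-- Let `A` be a `ℂ`-algebra with character `ε` and augmentation ideal `J`,
`W₀` a `ℂ`-vector space, and `Y = hom_ℂ(A, ℂ) ⊗ W₀`, where
`hom_ℂ(A, ℂ) = { f ∈ A* : f(Jⁿ) = 0 for some n }` carries the right `A`-action induced by
left multiplication (acting on the first tensor factor).  Then the `ε`-Whittaker vectors of
`Y` are exactly `ε ⊗ W₀ ≅ W₀`. -/
theorem stmt_11 (W₀ : Type) [AddCommGroup W₀] [Module ℂ W₀] :
    ∀ y : (↥(torsionHom A ℂ ε)) ⊗[ℂ] W₀,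
      (∀ a : A, (op a) • y = ε a • y) ↔
        ∃ w : W₀, y = (⟨ε.toLinearMap, eps_mem A ε⟩ : ↥(torsionHom A ℂ ε)) ⊗ₜ[ℂ] w := by
  classical
  set M := ↥(torsionHom A ℂ ε)
  set εv : M := (⟨ε.toLinearMap, eps_mem A ε⟩ : M)
  intro y
  constructor
  · intro h
    let b := Module.Basis.ofVectorSpace ℂ W₀
    let e : M ⊗[ℂ] W₀ ≃ₗ[ℂ] (Module.Basis.ofVectorSpaceIndex ℂ W₀ →₀ M) :=
      (TensorProduct.congr (LinearEquiv.refl ℂ M) b.repr).trans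
        (TensorProduct.finsuppScalarRight ℂ ℂ M _)
    have key : ∀ (a : A) (z : M ⊗[ℂ] W₀) (i), e ((op a) • z) i = (op a) • (e z i) := by
      intro a z i
      induction z using TensorProduct.induction_on with
      | zero => rw [smul_zero, e.map_zero]; simp
      | tmul f w =>
          rw [TensorProduct.smul_tmul']
          show (TensorProduct.finsuppScalarRight ℂ ℂ M _) (((op a) • f) ⊗ₜ[ℂ] b.repr w) i
            = (op a) • ((TensorProduct.finsuppScalarRight ℂ ℂ M _) (f ⊗ₜ[ℂ] b.repr w) i)
          rw [TensorProduct.finsuppScalarRight_apply_tmul_apply,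
            TensorProduct.finsuppScalarRight_apply_tmul_apply]
          exact (smul_comm _ _ _)
      | add u v hu hv =>
          rw [smul_add, map_add, map_add, Finsupp.add_apply, Finsupp.add_apply, hu, hv,
            smul_add]
    have hcomp : ∀ i, ∀ a : A, (op a) • (e y i) = ε a • (e y i) := by
      intro i a
      rw [← key a y i, h a, map_smul, Finsupp.smul_apply]
    have hrep : ∀ i, e y i = (((e y i : M) : A →ₗ[ℂ] ℂ) 1) • εv := fun i =>
      whittaker_single A ε (e y i) (hcomp i)
    let c : Module.Basis.ofVectorSpaceIndex ℂ W₀ →₀ ℂ :=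
      (e y).mapRange (fun f : M => ((f : A →ₗ[ℂ] ℂ) 1)) (by simp)
    refine ⟨b.repr.symm c, ?_⟩
    apply e.injective
    ext i
    have : e (εv ⊗ₜ[ℂ] (b.repr.symm c)) i = c i • εv := by
      show (TensorProduct.finsuppScalarRight ℂ ℂ M _) (εv ⊗ₜ[ℂ] b.repr (b.repr.symm c)) i
        = c i • εv
      rw [LinearEquiv.apply_symm_apply, TensorProduct.finsuppScalarRight_apply_tmul_apply]
    rw [this]
    rw [hrep i]
    simp [c, Finsupp.mapRange_apply]
  · rintro ⟨w, rfl⟩ a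
    rw [TensorProduct.smul_tmul', smul_eps_self A ε a, ← TensorProduct.smul_tmul']

end Stmt11
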